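/- arXiv:2407.08169 — 2 statements merged into one kernel-verified Lean document; each statement's English description precedes it below -/
import Mathlib

section
/- Let E be a finite-dimensional real inner product space, let μ > 0, and let φ₁, φ₂ : E → ℝ be μ-strongly convex functions with minimizers x₁ ∈ argmin φ₁ and x₂ ∈ argmin φ₂. If the difference φ₂ − φ₁ is differentiable, then (μ/2)‖x₁ − x₂‖² ≤ |⟨x₁ − x₂, ∇(φ₂ − φ₁)(x₁)⟩|. -/
open RealInnerProductSpace

/-- At a minimizer of a `μ`-strongly convex function, we have quadratic growth. -/
lemma strong_min_growth {E : Type*} [NormedAddCommGroup E] [InnerProductSpace ℝ E]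
    {μ : ℝ} (f : E → ℝ) (hf : StrongConvexOn Set.univ μ f)
    (x : E) (hx : ∀ y, f x ≤ f y) (y : E) :
    f x + μ / 2 * ‖x - y‖ ^ 2 ≤ f y := by
  set C := μ / 2 * ‖x - y‖ ^ 2 with hC
  have key : ∀ t ∈ Set.Ioo (0:ℝ) 1, (1 - t) * C ≤ f y - f x := by
    intro t ht
    have h := hf.2 (Set.mem_univ x) (Set.mem_univ y) (le_of_lt (by linarith [ht.2] : (0:ℝ) < 1 - t))
      (le_of_lt ht.1) (by ring)
    have hmin := hx ((1 - t) • x + t • y)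
    have := hmin.trans h
    simp only [smul_eq_mul] at this
    rw [hC]
    nlinarith [ht.1, ht.2]
  have htend : Filter.Tendsto (fun t : ℝ => (1 - t) * C) (nhdsWithin 0 (Set.Ioi 0)) (nhds C) := by
    have : Filter.Tendsto (fun t : ℝ => (1 - t) * C) (nhds 0) (nhds ((1 - 0) * C)) := by
      exact (Filter.Tendsto.const_sub 1 Filter.tendsto_id).mul_const C
    simpa using this.mono_left nhdsWithin_le_nhds
  have hC_le : C ≤ f y - f x := by
    refine le_of_tendsto htend ?_
    filter_upwards [Ioo_mem_nhdsGT_of_mem (by norm_num : (0:ℝ) ∈ Set.Ico (0:ℝ) 1)] with t ht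
    exact key t ht
  linarith

/-- **Optimizer comparison lemma.** If `φ₁, φ₂` are `μ`-strongly convex on a
finite-dimensional real inner product space with minimizers `x₁, x₂`, and the
difference `φ₂ - φ₁` is differentiable (with gradient `g`), then
`(μ/2)‖x₁ - x₂‖² ≤ |⟨x₁ - x₂, ∇(φ₂ - φ₁)(x₁)⟩|`. -/
theorem optimizer_comparison
    {E : Type*} [NormedAddCommGroup E] [InnerProductSpace ℝ E] [FiniteDimensional ℝ E]
    {μ : ℝ} (hμ : 0 < μ) (φ₁ φ₂ : E → ℝ)
    (h₁ : StrongConvexOn Set.univ μ φ₁) (h₂ : StrongConvexOn Set.univ μ φ₂)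
    (x₁ x₂ : E) (hx₁ : ∀ y, φ₁ x₁ ≤ φ₁ y) (hx₂ : ∀ y, φ₂ x₂ ≤ φ₂ y)
    (g : E → E) (hg : ∀ x, HasGradientAt (fun z => φ₂ z - φ₁ z) (g x) x) :
    μ / 2 * ‖x₁ - x₂‖ ^ 2 ≤ |⟪x₁ - x₂, g x₁⟫| := by
  set v := x₂ - x₁ with hv
  set C := μ / 2 * ‖x₁ - x₂‖ ^ 2 with hC
  have hC0 : 0 ≤ C := by positivity
  -- quadratic growth at the two minimizers
  have hgrow₁ : φ₁ x₁ + C ≤ φ₁ x₂ := strong_min_growth φ₁ h₁ x₁ hx₁ x₂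
  have hgrow₂ : φ₂ x₂ + C ≤ φ₂ x₁ := by
    have := strong_min_growth φ₂ h₂ x₂ hx₂ x₁
    rwa [norm_sub_rev] at this
  set ψ := fun z => φ₂ z - φ₁ z with hψ
  -- bound on the difference quotient along the segment
  have key : ∀ t ∈ Set.Ioo (0:ℝ) 1, ψ (x₁ + t • v) - ψ x₁ ≤ -(t * (2 - t) * C) := by
    intro t ht
    have hcomb : (1 - t) • x₁ + t • x₂ = x₁ + t • v := by
      simp [hv, smul_sub, sub_smul]; abel
    have h := h₂.2 (Set.mem_univ x₁) (Set.mem_univ x₂)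
      (le_of_lt (by linarith [ht.2] : (0:ℝ) < 1 - t)) (le_of_lt ht.1) (by ring)
    rw [hcomb] at h
    have hmin := hx₁ (x₁ + t • v)
    simp only [smul_eq_mul] at h
    simp only [hψ]
    rw [hC] at hgrow₂ ⊢
    nlinarith [ht.1, ht.2, hgrow₂]
  -- derivative of ψ along the segment
  have hp : HasDerivAt (fun t : ℝ => x₁ + t • v) v 0 := by
    simpa using ((hasDerivAt_id (0:ℝ)).smul_const v).const_add x₁
  have hF : HasDerivAt (fun t : ℝ => ψ (x₁ + t • v)) ⟪g x₁, v⟫ 0 := by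
    have hfd : HasFDerivAt ψ (InnerProductSpace.toDual ℝ E (g x₁)) x₁ := by
      have := hg x₁
      rw [hasGradientAt_iff_hasFDerivAt] at this
      simpa using this
    have hfd' : HasFDerivAt ψ (InnerProductSpace.toDual ℝ E (g x₁)) (x₁ + (0:ℝ) • v) := by
      simpa using hfd
    have := hfd'.comp_hasDerivAt 0 hp
    simpa [InnerProductSpace.toDual_apply_apply, Function.comp_def] using this
  -- compare limits
  have hslope : Filter.Tendsto (fun t : ℝ => (ψ (x₁ + t • v) - ψ x₁) / t)
      (nhdsWithin 0 (Set.Ioi 0)) (nhds ⟪g x₁, v⟫) := by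
    have h := hasDerivAt_iff_tendsto_slope.mp hF
    have hmono : nhdsWithin (0:ℝ) (Set.Ioi 0) ≤ nhdsWithin 0 {0}ᶜ :=
      nhdsWithin_mono 0 (fun x hx => ne_of_gt hx)
    have := h.mono_left hmono
    refine this.congr' ?_
    filter_upwards [self_mem_nhdsWithin] with t ht
    simp [slope_def_field, div_eq_inv_mul]
  have hbound : Filter.Tendsto (fun t : ℝ => -((2 - t) * C))
      (nhdsWithin 0 (Set.Ioi 0)) (nhds (-(2 * C))) := by
    have : Filter.Tendsto (fun t : ℝ => -((2 - t) * C)) (nhds 0) (nhds (-((2 - 0) * C))) := by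
      exact (((Filter.Tendsto.const_sub 2 Filter.tendsto_id).mul_const C)).neg
    simpa using this.mono_left nhdsWithin_le_nhds
  have hD : ⟪g x₁, v⟫ ≤ -(2 * C) := by
    refine le_of_tendsto_of_tendsto hslope hbound ?_
    filter_upwards [Ioo_mem_nhdsGT_of_mem (by norm_num : (0:ℝ) ∈ Set.Ico (0:ℝ) 1)] with t ht
    have hk := key t ht
    rw [div_le_iff₀ ht.1]
    calc ψ (x₁ + t • v) - ψ x₁ ≤ -(t * (2 - t) * C) := hk
      _ = -((2 - t) * C) * t := by ring
  have hinner : ⟪x₁ - x₂, g x₁⟫ = -⟪g x₁, v⟫ := by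
    rw [real_inner_comm]
    rw [hv, ← inner_neg_right]
    congr 1
    abel
  have h2C : 2 * C ≤ ⟪x₁ - x₂, g x₁⟫ := by rw [hinner]; linarith
  calc C ≤ 2 * C := by linarith
    _ ≤ ⟪x₁ - x₂, g x₁⟫ := h2C
    _ ≤ |⟪x₁ - x₂, g x₁⟫| := le_abs_self _
end

section
/- In the weighted empirical risk minimization setting, suppose each function θ ↦ (1/n)ℓ(z_i, θ) is differentiable and that both L(·, 𝟙) and L(·, 𝟙^{n∖i}) are μ-strongly convex (μ > 0) with minimizers θ̂(𝟙) and θ̂(𝟙^{n∖i}). Then for every i ∈ {1,…,n}, ‖θ̂(𝟙^{n∖i}) − θ̂(𝟙)‖ ≤ (2/(nμ))‖∇_θ ℓ(z_i, θ̂(𝟙))‖; in particular, ‖θ̂(𝟙^{n∖i}) − θ̂(𝟙)‖ ≤ (2/μ) · max_{i∈[n]} ‖(1/n)∇_θ ℓ(z_i, θ̂(𝟙))‖. -/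
open InnerProductSpace Filter Set Topology

set_option maxHeartbeats 1000000

/-- **Closeness of the full-data and leave-one-out minimizers** in weighted
empirical risk minimization.  If each `θ ↦ (1/n) ℓ (z i) θ` is differentiable
(with gradient `gradℓ (z i) θ`) and both `L(·, 𝟙)` and `L(·, 𝟙^{n∖i})` are
`μ`-strongly convex with minimizers `θ1` and `θloo i`, then
`‖θloo i - θ1‖ ≤ (2/(nμ)) ‖∇ℓ(z_i, θ1)‖`, and in particular
`‖θloo i - θ1‖ ≤ (2/μ) max_j ‖(1/n) ∇ℓ(z_j, θ1)‖`. -/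
theorem loo_minimizer_closeness
    {d n : ℕ} (hn : 0 < n) {Z : Type*} (z : Fin n → Z)
    {μ lam : ℝ} (hμ : 0 < μ) (hlam : 0 ≤ lam)
    (ℓ : Z → EuclideanSpace ℝ (Fin d) → ℝ)
    (π : EuclideanSpace ℝ (Fin d) → ℝ)
    (gradℓ : Z → EuclideanSpace ℝ (Fin d) → EuclideanSpace ℝ (Fin d))
    (hgrad : ∀ (i : Fin n) θ, HasGradientAt (fun θ' => (1 / (n : ℝ)) * ℓ (z i) θ')
      ((1 / (n : ℝ)) • gradℓ (z i) θ) θ)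
    (L : (Fin n → ℝ) → EuclideanSpace ℝ (Fin d) → ℝ)
    (hLdef : ∀ w θ, L w θ = (1 / (n : ℝ)) * ∑ i, w i * ℓ (z i) θ + lam * π θ)
    (θ1 : EuclideanSpace ℝ (Fin d))
    (hconv1 : StrongConvexOn Set.univ μ (L fun _ => 1))
    (hθ1 : ∀ θ, L (fun _ => 1) θ1 ≤ L (fun _ => 1) θ)
    (θloo : Fin n → EuclideanSpace ℝ (Fin d))
    (hconvloo : ∀ i : Fin n, StrongConvexOn Set.univ μ (L fun j => if j = i then 0 else 1))
    (hθloo : ∀ (i : Fin n) θ,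
      L (fun j => if j = i then 0 else 1) (θloo i) ≤ L (fun j => if j = i then 0 else 1) θ) :
    ∀ i : Fin n,
      ‖θloo i - θ1‖ ≤ 2 / (n * μ) * ‖gradℓ (z i) θ1‖ ∧
      ‖θloo i - θ1‖ ≤ 2 / μ *
        Finset.univ.sup'
          (Finset.univ_nonempty_iff.mpr (Fin.pos_iff_nonempty.mp hn))
          (fun j => ‖(1 / (n : ℝ)) • gradℓ (z j) θ1‖) := by
  intro i
  set f : EuclideanSpace ℝ (Fin d) → ℝ := fun θ => (1 / (n : ℝ)) * ℓ (z i) θ with hf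
  set g : EuclideanSpace ℝ (Fin d) := (1 / (n : ℝ)) • gradℓ (z i) θ1 with hg
  set δ : EuclideanSpace ℝ (Fin d) := θloo i - θ1 with hδ
  set L1 : EuclideanSpace ℝ (Fin d) → ℝ := L (fun _ => 1) with hL1
  set Lo : EuclideanSpace ℝ (Fin d) → ℝ := L (fun j => if j = i then 0 else 1) with hLo
  have hsub : ∀ θ, L1 θ = Lo θ + f θ := by
    intro θ
    rw [hL1, hLo, hLdef, hLdef, hf]
    have : ∑ j, (if j = i then (0:ℝ) else 1) * ℓ (z j) θ
        = (∑ j, ℓ (z j) θ) - ℓ (z i) θ := by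
      have h1 : ∀ j ∈ Finset.univ, (if j = i then (0:ℝ) else 1) * ℓ (z j) θ
          = ℓ (z j) θ - (if j = i then ℓ (z j) θ else 0) := fun j _ => by
        by_cases h : j = i <;> simp [h]
      rw [Finset.sum_congr rfl h1, Finset.sum_sub_distrib,
        Finset.sum_ite_eq' Finset.univ i (fun j => ℓ (z j) θ)]
      simp
    rw [this]
    simp only [one_mul]
    ring
  have hkey : μ / 2 * ‖δ‖ ^ 2 ≤ ⟪g, δ⟫_ℝ := by
    have hline : HasDerivAt (fun t : ℝ => θ1 + t • δ) δ 0 := by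
      simpa using ((hasDerivAt_id (0:ℝ)).smul_const δ).const_add θ1
    have hder : HasDerivAt (fun t : ℝ => f (θ1 + t • δ)) ⟪g, δ⟫_ℝ 0 := by
      have hfd := (hgrad i θ1).hasFDerivAt
      rw [show θ1 = θ1 + (0:ℝ) • δ by simp] at hfd
      have h2 := hfd.comp_hasDerivAt 0 hline
      simp only [Function.comp_def, InnerProductSpace.toDual_apply_apply, zero_smul,
        add_zero] at h2
      exact h2
    rw [hasDerivAt_iff_tendsto_slope] at hder
    have hder' : Tendsto (slope (fun t : ℝ => f (θ1 + t • δ)) 0) (𝓝[>] 0) (𝓝 ⟪g, δ⟫_ℝ) :=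
      hder.mono_left (nhdsWithin_mono 0 (fun t ht => ne_of_gt ht))
    have hother : Tendsto (fun t : ℝ => μ / 2 * (1 - t) * ‖δ‖ ^ 2) (𝓝[>] 0)
        (𝓝 (μ / 2 * ‖δ‖ ^ 2)) := by
      have hc : Continuous (fun t : ℝ => μ / 2 * (1 - t) * ‖δ‖ ^ 2) := by continuity
      have := (hc.tendsto 0).mono_left (nhdsWithin_le_nhds (s := Set.Ioi (0:ℝ)))
      simpa using this
    refine le_of_tendsto_of_tendsto hother hder' ?_
    filter_upwards [Ioo_mem_nhdsGT one_pos] with t ht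
    obtain ⟨ht0, ht1⟩ := ht
    have hcomb : (1 - t) • θ1 + t • θloo i = θ1 + t • δ := by
      rw [hδ, smul_sub, sub_smul, one_smul]; abel
    have hsc := (hconvloo i).2 (Set.mem_univ θ1) (Set.mem_univ (θloo i))
      (by linarith : (0:ℝ) ≤ 1 - t) ht0.le (by ring)
    rw [hcomb] at hsc
    have hnorm : ‖θ1 - θloo i‖ = ‖δ‖ := by
      rw [hδ, ← norm_neg]; congr 1; abel
    rw [hnorm] at hsc
    have hmin1 : L1 θ1 ≤ L1 (θ1 + t • δ) := hθ1 _
    have hmino : Lo (θloo i) ≤ Lo θ1 := hθloo i _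
    have h1 := hsub θ1
    have h2 := hsub (θ1 + t • δ)
    have hstep : μ / 2 * ((1 - t) * t) * ‖δ‖ ^ 2 ≤ f (θ1 + t • δ) - f θ1 := by
      rw [← hLo] at hsc
      simp only [smul_eq_mul] at hsc
      nlinarith [hsc, hmin1, hmino, h1, h2]
    rw [slope_def_field, sub_zero, le_div_iff₀ ht0]
    simp only [zero_smul, add_zero]
    nlinarith [hstep]
  have hCS : ⟪g, δ⟫_ℝ ≤ ‖g‖ * ‖δ‖ := real_inner_le_norm g δ
  have hmain : ‖δ‖ ≤ 2 / μ * ‖g‖ := by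
    rcases eq_or_lt_of_le (norm_nonneg δ) with h0 | h0
    · rw [← h0]; positivity
    · rw [show 2 / μ * ‖g‖ = 2 * ‖g‖ / μ by ring, le_div_iff₀ hμ]
      nlinarith [hkey.trans hCS]
  constructor
  · have hgn : ‖g‖ = 1 / (n : ℝ) * ‖gradℓ (z i) θ1‖ := by
      rw [hg, norm_smul]
      congr 1
      rw [Real.norm_eq_abs, abs_of_nonneg (by positivity)]
    calc ‖δ‖ ≤ 2 / μ * ‖g‖ := hmain
      _ = 2 / ((n : ℝ) * μ) * ‖gradℓ (z i) θ1‖ := by rw [hgn]; ring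
  · calc ‖δ‖ ≤ 2 / μ * ‖g‖ := hmain
      _ ≤ 2 / μ * Finset.univ.sup'
          (Finset.univ_nonempty_iff.mpr (Fin.pos_iff_nonempty.mp hn))
          (fun j => ‖(1 / (n : ℝ)) • gradℓ (z j) θ1‖) := by
        apply mul_le_mul_of_nonneg_left _ (by positivity)
        exact Finset.le_sup' (fun j => ‖(1 / (n : ℝ)) • gradℓ (z j) θ1‖) (Finset.mem_univ i)
end
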